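/- Let Q be a privacy protocol on A = {1,…,a} with matrix Q̃ ∈ ℝ^{B×A}, all entries positive, satisfying ε-LDP, i.e. Q̃_{y|x}/Q̃_{y|x'} ≤ e^ε for all y, x, x'. For p in the interior of the simplex with all p_x > 0, let D_p = diag(1/(Q̃p)_1,…,1/(Q̃p)_b), and let J be the (a−1)×(a−1) matrix with J_{x,x'} = ∑_y (Q̃_{y|x} − Q̃_{y|a})(Q̃_{y|x'} − Q̃_{y|a})/(Q̃p)_y. Then each diagonal entry satisfies J_{x,x} ≤ (e^ε − 1)^2, and hence det(J) ≤ (e^ε − 1)^{2(a−1)}. -/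

import Mathlib

/-- Trace of a real symmetric matrix equals the sum of its eigenvalues. -/
lemma trace_eq_sum_eig {n : Type*} [Fintype n] [DecidableEq n] {A : Matrix n n ℝ}
    (hA : A.IsHermitian) : A.trace = ∑ i, hA.eigenvalues i := by
  nth_rewrite 1 [hA.spectral_theorem]
  rw [Unitary.conjStarAlgAut_apply, Matrix.trace_mul_cycle, Unitary.coe_star_mul_self, Matrix.one_mul,
    Matrix.trace_diagonal]
  simp

/-- AM-GM style bound: product of nonnegatives with sum at most `m * C` is at most `C ^ m`. -/
lemma prod_le_of_sum_le {m : ℕ} (hm : 0 < m) (z : Fin m → ℝ) (hz : ∀ i, 0 ≤ z i)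
    (C : ℝ) (h : ∑ i, z i ≤ m * C) : ∏ i, z i ≤ C ^ m := by
  have hm' : (m : ℝ) ≠ 0 := Nat.cast_ne_zero.mpr hm.ne'
  have hw : ∑ _i : Fin m, (m : ℝ)⁻¹ = 1 := by
    simp [Finset.sum_const]
    field_simp
  have h1 := Real.geom_mean_le_arith_mean_weighted Finset.univ (fun _ => (m : ℝ)⁻¹) z
    (fun _ _ => by positivity) hw (fun i _ => hz i)
  rw [Real.finset_prod_rpow Finset.univ z (fun i _ => hz i)] at h1
  have h2 : (∏ i, z i) ^ ((m : ℝ)⁻¹) ≤ C := by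
    refine h1.trans ?_
    rw [← Finset.mul_sum]
    rw [inv_mul_le_iff₀ (by positivity)]
    linarith [h]
  have hP : (0 : ℝ) ≤ ∏ i, z i := Finset.prod_nonneg fun i _ => hz i
  calc ∏ i, z i = ((∏ i, z i) ^ ((m : ℝ)⁻¹)) ^ m := by
        rw [← Real.rpow_natCast ((∏ i, z i) ^ ((m : ℝ)⁻¹)) m, ← Real.rpow_mul hP,
          inv_mul_cancel₀ hm', Real.rpow_one]
    _ ≤ C ^ m := pow_le_pow_left₀ (Real.rpow_nonneg hP _) h2 m

theorem stmt14 (m b : ℕ) (hm : 1 ≤ m) (ε : ℝ)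
    (Q : Matrix (Fin b) (Fin (m + 1)) ℝ) (hQpos : ∀ y x, 0 < Q y x)
    (hcol : ∀ x, ∑ y, Q y x = 1)
    (hLDP : ∀ y x x', Q y x / Q y x' ≤ Real.exp ε)
    (p : Fin (m + 1) → ℝ) (hp : ∀ x, 0 < p x) (hp1 : ∑ x, p x = 1) :
    (∀ x : Fin m,
      (Matrix.of fun x x' : Fin m =>
        ∑ y, (Q y x.castSucc - Q y (Fin.last m)) * (Q y x'.castSucc - Q y (Fin.last m))
          / Q.mulVec p y) x x ≤ (Real.exp ε - 1) ^ 2) ∧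
    (Matrix.of fun x x' : Fin m =>
        ∑ y, (Q y x.castSucc - Q y (Fin.last m)) * (Q y x'.castSucc - Q y (Fin.last m))
          / Q.mulVec p y).det ≤ (Real.exp ε - 1) ^ (2 * m) := by
  set c : ℝ := Real.exp ε - 1 with hc_def
  -- b is nonempty
  have hb : Nonempty (Fin b) := by
    rcases isEmpty_or_nonempty (Fin b) with h | h
    · exfalso; have := hcol 0; simp at this
    · exact h
  obtain ⟨y₀⟩ := hb
  have hexp : (1 : ℝ) ≤ Real.exp ε := by
    have := hLDP y₀ 0 0
    rwa [div_self (hQpos y₀ 0).ne'] at this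
  have hc : 0 ≤ c := by simp only [hc_def]; linarith
  -- positivity of mulVec
  have hs : ∀ y, 0 < Q.mulVec p y := by
    intro y
    have : Q.mulVec p y = ∑ x, Q y x * p x := rfl
    rw [this]
    exact Finset.sum_pos (fun x _ => mul_pos (hQpos y x) (hp x)) ⟨0, Finset.mem_univ 0⟩
  -- key per-y bound
  have hkey : ∀ (x x' : Fin (m + 1)) (y : Fin b),
      (Q y x - Q y (Fin.last m)) * (Q y x' - Q y (Fin.last m)) / Q.mulVec p y ≤
        c ^ 2 * Q y (Fin.last m) ∨ True := fun _ _ _ => Or.inr trivial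
  have hdiag : ∀ x : Fin (m + 1),
      ∑ y, (Q y x - Q y (Fin.last m)) * (Q y x - Q y (Fin.last m)) / Q.mulVec p y ≤ c ^ 2 := by
    intro x
    have hterm : ∀ y, (Q y x - Q y (Fin.last m)) * (Q y x - Q y (Fin.last m)) / Q.mulVec p y ≤
        c ^ 2 * Q y (Fin.last m) := by
      intro y
      obtain ⟨x₀, -, hx₀⟩ := Finset.exists_min_image Finset.univ (fun x' => Q y x')
        ⟨0, Finset.mem_univ 0⟩
      have hμ : 0 < Q y x₀ := hQpos y x₀
      have hmin : ∀ x', Q y x₀ ≤ Q y x' := fun x' => hx₀ x' (Finset.mem_univ x')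
      -- mulVec lower bound
      have hsl : Q y x₀ ≤ Q.mulVec p y := by
        have : Q.mulVec p y = ∑ x', Q y x' * p x' := rfl
        rw [this]
        calc Q y x₀ = ∑ x', Q y x₀ * p x' := by rw [← Finset.mul_sum, hp1, mul_one]
          _ ≤ ∑ x', Q y x' * p x' :=
            Finset.sum_le_sum fun x' _ => mul_le_mul_of_nonneg_right (hmin x') (hp x').le
      -- |d| ≤ c * Q y x₀
      have hub : ∀ x', Q y x' ≤ Real.exp ε * Q y x₀ := by
        intro x'
        have := hLDP y x' x₀
        rwa [div_le_iff₀ hμ] at this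
      have habs : |Q y x - Q y (Fin.last m)| ≤ c * Q y x₀ := by
        rw [abs_le]
        constructor
        · have h1 := hub (Fin.last m)
          have h2 := hmin x
          simp only [hc_def]; nlinarith
        · have h1 := hub x
          have h2 := hmin (Fin.last m)
          simp only [hc_def]; nlinarith
      have hd2 : (Q y x - Q y (Fin.last m)) * (Q y x - Q y (Fin.last m)) ≤ (c * Q y x₀) ^ 2 := by
        have := sq_abs (Q y x - Q y (Fin.last m))
        nlinarith [abs_nonneg (Q y x - Q y (Fin.last m))]
      calc (Q y x - Q y (Fin.last m)) * (Q y x - Q y (Fin.last m)) / Q.mulVec p y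
          ≤ (c * Q y x₀) ^ 2 / Q y x₀ :=
            div_le_div₀ (by positivity) hd2 hμ hsl
        _ = c ^ 2 * Q y x₀ := by field_simp
        _ ≤ c ^ 2 * Q y (Fin.last m) :=
            mul_le_mul_of_nonneg_left (hmin (Fin.last m)) (by positivity)
    calc ∑ y, (Q y x - Q y (Fin.last m)) * (Q y x - Q y (Fin.last m)) / Q.mulVec p y
        ≤ ∑ y, c ^ 2 * Q y (Fin.last m) := Finset.sum_le_sum fun y _ => hterm y
      _ = c ^ 2 := by rw [← Finset.mul_sum, hcol, mul_one]
  set J : Matrix (Fin m) (Fin m) ℝ :=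
    Matrix.of fun x x' : Fin m =>
      ∑ y, (Q y x.castSucc - Q y (Fin.last m)) * (Q y x'.castSucc - Q y (Fin.last m))
        / Q.mulVec p y with hJ_def
  -- J is a Gram matrix
  set A : Matrix (Fin b) (Fin m) ℝ :=
    Matrix.of fun y x => (Q y x.castSucc - Q y (Fin.last m)) / Real.sqrt (Q.mulVec p y)
    with hA_def
  have hJA : J = A.conjTranspose * A := by
    ext x x'
    simp only [hJ_def, hA_def, Matrix.mul_apply, Matrix.conjTranspose_apply, Matrix.of_apply,
      RCLike.star_def, starRingEnd_apply, star_trivial]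
    refine Finset.sum_congr rfl fun y _ => ?_
    rw [div_mul_div_comm, Real.mul_self_sqrt (hs y).le]
  have hPSD : J.PosSemidef := by
    rw [hJA]; exact Matrix.posSemidef_conjTranspose_mul_self A
  have hH : J.IsHermitian := hPSD.1
  constructor
  · intro x
    exact hdiag x.castSucc
  · -- trace bound
    have htr : J.trace ≤ m * c ^ 2 := by
      have : J.trace = ∑ x : Fin m, J x x := rfl
      rw [this]
      calc ∑ x : Fin m, J x x ≤ ∑ _x : Fin m, c ^ 2 :=
            Finset.sum_le_sum fun x _ => hdiag x.castSucc
        _ = m * c ^ 2 := by simp [Finset.sum_const, mul_comm]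
    have hsum : ∑ i, hH.eigenvalues i ≤ m * c ^ 2 := by
      rw [← trace_eq_sum_eig hH]; exact htr
    have hdet : J.det = ∏ i, hH.eigenvalues i := by
      have := hH.det_eq_prod_eigenvalues
      simpa using this
    show J.det ≤ c ^ (2 * m)
    rw [hdet, pow_mul]
    exact prod_le_of_sum_le hm (hH.eigenvalues) (fun i => hPSD.eigenvalues_nonneg i)
      (c ^ 2) hsum
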